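/- Let n > 4 be even and m ≤ n/2. Let F be a vectorial bent (n,m)-function with F(0) = 0, i.e. W_F(μ,ν) ∈ {2^{n/2}, −2^{n/2}} for every μ ∈ 𝔽₂^m∖{0} and every ν ∈ 𝔽₂ⁿ. Then C_F is a minimal linear code of length 2ⁿ−1 and dimension n+m, its minimum nonzero Hamming weight equals 2^{n−1} − 2^{n/2−1}, and over the pairs (μ,ν) ∈ 𝔽₂^m × 𝔽₂ⁿ: |{(μ,ν) : wt(c(μ,ν)) = 2^{n−1}}| = 2ⁿ−1, |{(μ,ν) : wt(c(μ,ν)) = 2^{n−1} + 2^{n/2−1}}| = (2^m−1)(2^{n−1} − 2^{n/2−1}), and |{(μ,ν) : wt(c(μ,ν)) = 2^{n−1} − 2^{n/2−1}}| = (2^m−1)(2^{n−1} + 2^{n/2−1}). -/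

import Mathlib

def dotp {n : ℕ} (v x : Fin n → ZMod 2) : ZMod 2 := ∑ i, v i * x i

def wht {n : ℕ} (f : (Fin n → ZMod 2) → ZMod 2) (ν : Fin n → ZMod 2) : ℤ :=
  ∑ x : Fin n → ZMod 2, (-1 : ℤ) ^ (f x + dotp ν x).val

def whtF {n m : ℕ} (F : (Fin n → ZMod 2) → (Fin m → ZMod 2))
    (μ : Fin m → ZMod 2) (ν : Fin n → ZMod 2) : ℤ :=
  wht (fun x => dotp μ (F x)) ν

def cw {n m : ℕ} (F : (Fin n → ZMod 2) → (Fin m → ZMod 2))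
    (μ : Fin m → ZMod 2) (ν : Fin n → ZMod 2) :
    {x : Fin n → ZMod 2 // x ≠ 0} → ZMod 2 :=
  fun x => dotp μ (F x.1) + dotp ν x.1

def codeF {n m : ℕ} (F : (Fin n → ZMod 2) → (Fin m → ZMod 2)) :
    Set ({x : Fin n → ZMod 2 // x ≠ 0} → ZMod 2) :=
  Set.range fun p : (Fin m → ZMod 2) × (Fin n → ZMod 2) => cw F p.1 p.2

def wt {n : ℕ} (c : {x : Fin n → ZMod 2 // x ≠ 0} → ZMod 2) : ℕ :=
  (Finset.univ.filter fun x => c x = 1).card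

def IsMinimal {n : ℕ} (C : Set ({x : Fin n → ZMod 2 // x ≠ 0} → ZMod 2)) : Prop :=
  ∀ c ∈ C, ∀ c' ∈ C, c ≠ 0 → c' ≠ 0 →
    {x | c' x = 1} ⊆ {x | c x = 1} → c' = c

def weights {n m : ℕ} (F : (Fin n → ZMod 2) → (Fin m → ZMod 2)) : Set ℕ :=
  {w | ∃ c ∈ codeF F, c ≠ 0 ∧ wt c = w}

/- ### Auxiliary lemmas -/

lemma chi_add (a b : ZMod 2) : (-1:ℤ)^(a+b).val = (-1:ℤ)^a.val * (-1:ℤ)^b.val := by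
  revert a b; decide

lemma chi_val (a : ZMod 2) : ((-1:ℤ)^a.val) = 1 - 2 * (a.val : ℤ) := by
  revert a; decide

lemma chi_sum {ι : Type*} (s : Finset ι) (f : ι → ZMod 2) :
    (-1:ℤ)^(∑ i ∈ s, f i).val = ∏ i ∈ s, (-1:ℤ)^(f i).val := by
  induction s using Finset.cons_induction with
  | empty => simp
  | cons a s ha ih => rw [Finset.sum_cons, Finset.prod_cons, chi_add, ih]

lemma dotp_comm {n : ℕ} (v x : Fin n → ZMod 2) : dotp v x = dotp x v := by
  unfold dotp; exact Finset.sum_congr rfl fun i _ => mul_comm _ _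

lemma sum_chi_dotp {n : ℕ} (v : Fin n → ZMod 2) :
    ∑ x : Fin n → ZMod 2, (-1:ℤ)^(dotp v x).val = if v = 0 then 2^n else 0 := by
  have h1 : ∀ x : Fin n → ZMod 2, (-1:ℤ)^(dotp v x).val = ∏ i, (-1:ℤ)^(v i * x i).val :=
    fun x => chi_sum _ _
  have h2 : ∀ a : ZMod 2, (∑ b : ZMod 2, (-1:ℤ)^(a*b).val) = if a = 0 then 2 else 0 := by
    intro a
    have h : (∑ b : ZMod 2, (-1:ℤ)^(a*b).val) = (-1:ℤ)^(a*0).val + (-1:ℤ)^(a*1).val :=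
      Fin.sum_univ_two _
    rw [h]; revert a; decide
  calc ∑ x : Fin n → ZMod 2, (-1:ℤ)^(dotp v x).val
      = ∑ x : Fin n → ZMod 2, ∏ i, (-1:ℤ)^(v i * x i).val :=
        Finset.sum_congr rfl fun x _ => h1 x
    _ = ∏ i, ∑ b : ZMod 2, (-1:ℤ)^(v i * b).val :=
        (Fintype.prod_sum (fun i b => (-1:ℤ)^(v i * b).val)).symm
    _ = ∏ i, if v i = 0 then (2:ℤ) else 0 := Finset.prod_congr rfl fun i _ => h2 (v i)
    _ = if v = 0 then 2^n else 0 := by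
        by_cases hv : v = 0
        · simp [hv]
        · have : ∃ i, v i ≠ 0 := by
            by_contra h; push_neg at h; exact hv (funext h)
          obtain ⟨i, hi⟩ := this
          rw [if_neg hv]
          exact Finset.prod_eq_zero (Finset.mem_univ i) (by simp [hi])

lemma dotp_zero_right {n : ℕ} (v : Fin n → ZMod 2) : dotp v 0 = 0 := by simp [dotp]
lemma dotp_zero_left {n : ℕ} (v : Fin n → ZMod 2) : dotp 0 v = 0 := by simp [dotp]
lemma dotp_add_left {n : ℕ} (u v x : Fin n → ZMod 2) :
    dotp (u+v) x = dotp u x + dotp v x := by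
  simp [dotp, add_mul, Finset.sum_add_distrib]

lemma cw_add {n m : ℕ} (F : (Fin n → ZMod 2) → (Fin m → ZMod 2))
    (μ μ' : Fin m → ZMod 2) (ν ν' : Fin n → ZMod 2) :
    cw F (μ+μ') (ν+ν') = cw F μ ν + cw F μ' ν' := by
  funext x; simp only [cw, dotp_add_left, Pi.add_apply]; ring

lemma cw_zero {n m : ℕ} (F : (Fin n → ZMod 2) → (Fin m → ZMod 2)) :
    cw F 0 0 = 0 := by
  funext x; simp [cw, dotp_zero_left]

lemma wt_zero {n : ℕ} : wt (0 : {x : Fin n → ZMod 2 // x ≠ 0} → ZMod 2) = 0 := by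
  simp [wt]

lemma two_wt {n m : ℕ} (F : (Fin n → ZMod 2) → (Fin m → ZMod 2)) (h0 : F 0 = 0)
    (μ : Fin m → ZMod 2) (ν : Fin n → ZMod 2) :
    2 * (wt (cw F μ ν) : ℤ) = 2^n - whtF F μ ν := by
  set g : (Fin n → ZMod 2) → ZMod 2 := fun x => dotp μ (F x) + dotp ν x with hg
  have hg0 : g 0 = 0 := by simp [hg, h0, dotp_zero_right]
  have hval : ∀ a : ZMod 2, (a.val : ℤ) = if a = 1 then 1 else 0 := by decide
  have h1 : whtF F μ ν = 2^n - 2 * ∑ x : Fin n → ZMod 2, ((g x).val : ℤ) := by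
    unfold whtF wht
    calc (∑ x : Fin n → ZMod 2, (-1:ℤ) ^ ((fun x => dotp μ (F x)) x + dotp ν x).val)
        = ∑ x : Fin n → ZMod 2, (1 - 2*((g x).val:ℤ)) :=
          Finset.sum_congr rfl fun x _ => chi_val (g x)
      _ = (∑ _x : Fin n → ZMod 2, (1:ℤ)) - ∑ x : Fin n → ZMod 2, 2*((g x).val:ℤ) :=
          Finset.sum_sub_distrib _ _
      _ = 2^n - 2 * ∑ x : Fin n → ZMod 2, ((g x).val:ℤ) := by
          rw [Finset.sum_const, ← Finset.mul_sum]
          simp [Fintype.card_fun]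
  have h2 : ∑ x : Fin n → ZMod 2, ((g x).val : ℤ)
      = ((Finset.univ.filter fun x : Fin n → ZMod 2 => g x = 1).card : ℤ) := by
    rw [← Finset.sum_boole]
    exact Finset.sum_congr rfl fun x _ => hval (g x)
  have h3 : (Finset.univ.filter fun x : Fin n → ZMod 2 => g x = 1).card
      = wt (cw F μ ν) := by
    unfold wt
    apply Finset.card_bij (fun (x : Fin n → ZMod 2) hx => (⟨x, by
      rintro rfl
      rw [Finset.mem_filter] at hx
      rw [hg0] at hx
      exact one_ne_zero hx.2.symm⟩ : {x : Fin n → ZMod 2 // x ≠ 0}))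
    · intro a ha
      rw [Finset.mem_filter] at ha ⊢
      exact ⟨Finset.mem_univ _, ha.2⟩
    · intro a ha b hb h
      exact congrArg Subtype.val h
    · intro b hb
      rw [Finset.mem_filter] at hb
      refine ⟨b.1, Finset.mem_filter.mpr ⟨Finset.mem_univ _, hb.2⟩, rfl⟩
  rw [h1, h2, h3]
  ring

lemma sum_whtF {n m : ℕ} (F : (Fin n → ZMod 2) → (Fin m → ZMod 2)) (h0 : F 0 = 0)
    (μ : Fin m → ZMod 2) :
    ∑ ν : Fin n → ZMod 2, whtF F μ ν = 2^n := by
  unfold whtF wht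
  rw [Finset.sum_comm]
  have key : ∀ x : Fin n → ZMod 2,
      (∑ ν : Fin n → ZMod 2, (-1:ℤ) ^ (dotp μ (F x) + dotp ν x).val)
      = if x = 0 then (-1:ℤ)^(dotp μ (F x)).val * 2^n else 0 := by
    intro x
    have : ∀ ν : Fin n → ZMod 2, (-1:ℤ) ^ (dotp μ (F x) + dotp ν x).val
        = (-1:ℤ)^(dotp μ (F x)).val * (-1:ℤ)^(dotp x ν).val := by
      intro ν; rw [chi_add, dotp_comm ν x]
    rw [Finset.sum_congr rfl fun ν _ => this ν, ← Finset.mul_sum, sum_chi_dotp x]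
    by_cases hx : x = 0 <;> simp [hx]
  rw [Finset.sum_congr rfl fun x _ => key x, Finset.sum_ite_eq' Finset.univ 0]
  simp [h0, dotp_zero_right]

lemma card_filter_pos {n m : ℕ} (F : (Fin n → ZMod 2) → (Fin m → ZMod 2)) (h0 : F 0 = 0)
    (μ : Fin m → ZMod 2) (k : ℕ) (hk : n = 2*k) (hk1 : 1 ≤ k)
    (hb : ∀ ν : Fin n → ZMod 2, whtF F μ ν = 2^k ∨ whtF F μ ν = -2^k) :
    (Finset.univ.filter fun ν : Fin n → ZMod 2 =>
      whtF F μ ν = 2^k).card = 2^(n-1) + 2^(k-1) := by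
  classical
  set p : (Fin n → ZMod 2) → Prop := fun ν => whtF F μ ν = 2^k with hp
  set c := (Finset.univ.filter p).card with hc
  set c' := (Finset.univ.filter fun ν => ¬ p ν).card with hc'
  have hcc' : c + c' = 2^n := by
    rw [hc, hc', Finset.card_filter_add_card_filter_not, Finset.card_univ]
    simp [Fintype.card_fun]
  have hsum := sum_whtF F h0 μ
  rw [← Finset.sum_filter_add_sum_filter_not Finset.univ p] at hsum
  have e1 : ∑ ν ∈ Finset.univ.filter p, whtF F μ ν = (c:ℤ) * 2^k := by
    rw [Finset.sum_congr rfl (fun ν hν => (Finset.mem_filter.mp hν).2),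
      Finset.sum_const, nsmul_eq_mul]
  have e2 : ∑ ν ∈ Finset.univ.filter (fun ν => ¬ p ν), whtF F μ ν
      = (c':ℤ) * (-2^k) := by
    rw [Finset.sum_congr rfl (fun ν hν => ((hb ν).resolve_left (Finset.mem_filter.mp hν).2)),
      Finset.sum_const, nsmul_eq_mul]
  rw [e1, e2] at hsum
  have hpow : (2:ℤ)^n = 2^k * 2^k := by rw [hk, two_mul, pow_add]
  have hdiff : (c:ℤ) - c' = 2^k := by
    have h2 : ((c:ℤ) - c') * 2^k = 2^k * 2^k := by rw [← hpow]; linarith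
    have := mul_right_cancel₀ (by positivity : (2:ℤ)^k ≠ 0) h2
    linarith
  have hcsum : (c:ℤ) + c' = 2^n := by exact_mod_cast congrArg (Nat.cast : ℕ → ℤ) hcc'
  have h2n : (2:ℤ)^n = 2*2^(n-1) := by
    rw [← pow_succ']; congr 1; omega
  have h2k : (2:ℤ)^k = 2*2^(k-1) := by
    rw [← pow_succ']; congr 1; omega
  have : (c:ℤ) = ((2^(n-1) + 2^(k-1) : ℕ) : ℤ) := by push_cast; linarith
  exact_mod_cast this

lemma card_filter_prod {α β : Type*} [Fintype α] [Fintype β] (p : α → β → Prop)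
    [DecidablePred fun q : α × β => p q.1 q.2] [∀ a, DecidablePred (p a)] :
    (Finset.univ.filter fun q : α × β => p q.1 q.2).card
      = ∑ a : α, (Finset.univ.filter (p a)).card := by
  rw [Finset.card_filter, Fintype.sum_prod_type]
  exact Finset.sum_congr rfl fun a _ => (Finset.card_filter _ _).symm

theorem stmt6 (n m : ℕ) (hn : 4 < n) (hne : Even n) (hm1 : 1 ≤ m) (hm : m ≤ n / 2)
    (F : (Fin n → ZMod 2) → (Fin m → ZMod 2)) (h0 : F 0 = 0)
    (hbent : ∀ μ : Fin m → ZMod 2, μ ≠ 0 → ∀ ν : Fin n → ZMod 2,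
      whtF F μ ν = 2 ^ (n / 2) ∨ whtF F μ ν = -2 ^ (n / 2)) :
    IsMinimal (codeF F) ∧
    Nat.card {x : Fin n → ZMod 2 // x ≠ 0} = 2 ^ n - 1 ∧
    Nat.card (codeF F) = 2 ^ (n + m) ∧
    IsLeast (weights F) (2 ^ (n - 1) - 2 ^ (n / 2 - 1)) ∧
    (Finset.univ.filter fun p : (Fin m → ZMod 2) × (Fin n → ZMod 2) =>
        wt (cw F p.1 p.2) = 2 ^ (n - 1)).card = 2 ^ n - 1 ∧
    (Finset.univ.filter fun p : (Fin m → ZMod 2) × (Fin n → ZMod 2) =>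
        wt (cw F p.1 p.2) = 2 ^ (n - 1) + 2 ^ (n / 2 - 1)).card
      = (2 ^ m - 1) * (2 ^ (n - 1) - 2 ^ (n / 2 - 1)) ∧
    (Finset.univ.filter fun p : (Fin m → ZMod 2) × (Fin n → ZMod 2) =>
        wt (cw F p.1 p.2) = 2 ^ (n - 1) - 2 ^ (n / 2 - 1)).card
      = (2 ^ m - 1) * (2 ^ (n - 1) + 2 ^ (n / 2 - 1)) := by
  classical
  set k := n / 2 with hkdef
  have hnev : n % 2 = 0 := Nat.even_iff.mp hne
  have hk : n = 2 * k := by omega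
  have hk3 : 3 ≤ k := by omega
  -- power facts over ℕ
  have pk1 : 1 ≤ 2^(k-1) := Nat.one_le_two_pow
  have pkn : 2^(k+2) ≤ 2^(n-1) := Nat.pow_le_pow_right (by norm_num) (by omega)
  have pk8 : 2^(k+2) = 8 * 2^(k-1) := by
    rw [show k+2 = (k-1)+3 by omega, pow_add]; ring
  have pn2 : 2^n = 2*2^(n-1) := by rw [← pow_succ']; congr 1; omega
  have pkk : 2^k = 2*2^(k-1) := by rw [← pow_succ']; congr 1; omega
  have hlt : 2^(k-1) < 2^(n-1) := by omega
  -- power facts over ℤ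
  have zn2 : (2:ℤ)^n = 2*2^(n-1) := by rw [← pow_succ']; congr 1; omega
  have zk2 : (2:ℤ)^k = 2*2^(k-1) := by rw [← pow_succ']; congr 1; omega
  have zwlo : ((2^(n-1) - 2^(k-1) : ℕ) : ℤ) = 2^(n-1) - 2^(k-1) := by
    rw [Nat.cast_sub (le_of_lt hlt)]; push_cast; ring
  have zwhi : ((2^(n-1) + 2^(k-1) : ℕ) : ℤ) = 2^(n-1) + 2^(k-1) := by push_cast; ring
  -- value of weights
  have hw00 : wt (cw F (0 : Fin m → ZMod 2) (0 : Fin n → ZMod 2)) = 0 := by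
    rw [cw_zero, wt_zero]
  have hmid : ∀ ν : Fin n → ZMod 2, ν ≠ 0 → wt (cw F 0 ν) = 2^(n-1) := by
    intro ν hν
    have hW : whtF F 0 ν = 0 := by
      unfold whtF wht
      have : ∀ x : Fin n → ZMod 2, (-1:ℤ) ^ ((fun x => dotp (0 : Fin m → ZMod 2) (F x)) x + dotp ν x).val
          = (-1:ℤ) ^ (dotp ν x).val := by
        intro x; simp [dotp_zero_left]
      rw [Finset.sum_congr rfl fun x _ => this x, sum_chi_dotp ν, if_neg hν]
    have h2 := two_wt F h0 0 ν
    rw [hW] at h2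
    have : (wt (cw F 0 ν) : ℤ) = ((2^(n-1) : ℕ) : ℤ) := by push_cast; linarith
    exact_mod_cast this
  have hpm : ∀ μ : Fin m → ZMod 2, μ ≠ 0 → ∀ ν : Fin n → ZMod 2,
      (whtF F μ ν = 2^k ∧ wt (cw F μ ν) = 2^(n-1) - 2^(k-1)) ∨
      (whtF F μ ν = -2^k ∧ wt (cw F μ ν) = 2^(n-1) + 2^(k-1)) := by
    intro μ hμ ν
    have h2 := two_wt F h0 μ ν
    rcases hbent μ hμ ν with hW | hW
    · left; refine ⟨hW, ?_⟩
      rw [hW] at h2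
      have : (wt (cw F μ ν) : ℤ) = ((2^(n-1) - 2^(k-1) : ℕ) : ℤ) := by
        rw [zwlo]; linarith
      exact_mod_cast this
    · right; refine ⟨hW, ?_⟩
      rw [hW] at h2
      have : (wt (cw F μ ν) : ℤ) = ((2^(n-1) + 2^(k-1) : ℕ) : ℤ) := by
        rw [zwhi]; linarith
      exact_mod_cast this
  have hbounds : ∀ μ ν, cw F μ ν ≠ 0 →
      2^(n-1) - 2^(k-1) ≤ wt (cw F μ ν) ∧ wt (cw F μ ν) ≤ 2^(n-1) + 2^(k-1) := by
    intro μ ν hc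
    by_cases hμ : μ = 0
    · subst hμ
      by_cases hν : ν = 0
      · exact absurd (hν ▸ cw_zero F) hc
      · rw [hmid ν hν]; omega
    · rcases hpm μ hμ ν with ⟨_, hw⟩ | ⟨_, hw⟩ <;> rw [hw] <;> omega
  have hzero : ∀ μ ν, cw F μ ν = 0 → μ = 0 ∧ ν = 0 := by
    intro μ ν hc
    by_cases hμ : μ = 0
    · subst hμ
      refine ⟨rfl, ?_⟩
      by_contra hν
      have := hmid ν hν
      rw [hc, wt_zero] at this
      omega
    · exfalso
      rcases hpm μ hμ ν with ⟨_, hw⟩ | ⟨_, hw⟩ <;> rw [hc, wt_zero] at hw <;> omega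
  have hcancel : ∀ a b : ZMod 2, a + b = 0 → a = b := by decide
  have hinj : Function.Injective
      (fun p : (Fin m → ZMod 2) × (Fin n → ZMod 2) => cw F p.1 p.2) := by
    intro p q hpq
    simp only at hpq
    have hadd : cw F (p.1 + q.1) (p.2 + q.2) = 0 := by
      rw [cw_add, hpq]
      funext x
      have : ∀ a : ZMod 2, a + a = 0 := by decide
      simp only [Pi.add_apply, Pi.zero_apply, this]
    obtain ⟨h1, h2⟩ := hzero _ _ hadd
    have e1 : p.1 = q.1 := funext fun i => hcancel _ _ (congrFun h1 i)
    have e2 : p.2 = q.2 := funext fun i => hcancel _ _ (congrFun h2 i)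
    exact Prod.ext e1 e2
  -- part 2
  have part2 : Nat.card {x : Fin n → ZMod 2 // x ≠ 0} = 2 ^ n - 1 := by
    rw [Nat.card_eq_fintype_card, Fintype.card_subtype, Finset.filter_ne',
      Finset.card_erase_of_mem (Finset.mem_univ _), Finset.card_univ]
    simp [Fintype.card_fun]
  -- part 3
  have part3 : Nat.card (codeF F) = 2 ^ (n + m) := by
    unfold codeF
    rw [Nat.card_range_of_injective hinj, Nat.card_eq_fintype_card, Fintype.card_prod]
    simp only [Fintype.card_fun, Fintype.card_fin, ZMod.card]
    rw [← pow_add]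
    ring_nf
  -- nonzero wt implies nonzero codeword
  have hne_of_wt : ∀ μ ν, wt (cw F μ ν) ≠ 0 → cw F μ ν ≠ 0 := by
    intro μ ν hw hc
    rw [hc, wt_zero] at hw
    exact hw rfl
  -- part 4
  have part4 : IsLeast (weights F) (2 ^ (n - 1) - 2 ^ (k - 1)) := by
    constructor
    · -- membership
      have hμ0 : (fun _ : Fin m => (1 : ZMod 2)) ≠ 0 := by
        intro h
        exact one_ne_zero (congrFun h ⟨0, hm1⟩)
      set μ₀ : Fin m → ZMod 2 := fun _ => 1 with hμ₀def
      have hcard := card_filter_pos F h0 μ₀ k hk (by omega) (hbent μ₀ hμ0)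
      have hpos : 0 < (Finset.univ.filter fun ν : Fin n → ZMod 2 =>
          whtF F μ₀ ν = 2^k).card := by omega
      obtain ⟨ν, hν⟩ := Finset.card_pos.mp hpos
      have hWν : whtF F μ₀ ν = 2^k := (Finset.mem_filter.mp hν).2
      have hwt : wt (cw F μ₀ ν) = 2^(n-1) - 2^(k-1) := by
        rcases hpm μ₀ hμ0 ν with ⟨_, hw⟩ | ⟨hW, _⟩
        · exact hw
        · exfalso
          rw [hWν] at hW
          have : (0:ℤ) < 2^k := by positivity
          linarith
      refine ⟨cw F μ₀ ν, ⟨(μ₀, ν), rfl⟩, ?_, hwt⟩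
      exact hne_of_wt _ _ (by omega)
    · rintro w ⟨c, ⟨⟨μ, ν⟩, rfl⟩, hcne, rfl⟩
      exact (hbounds μ ν hcne).1
  -- part 1 : minimality
  have part1 : IsMinimal (codeF F) := by
    intro c hc c' hc' hcne hc'ne hsub
    obtain ⟨⟨μ, ν⟩, rfl⟩ := hc
    obtain ⟨⟨μ', ν'⟩, rfl⟩ := hc'
    simp only at hcne hc'ne hsub ⊢
    by_contra hne2
    have hdd : cw F (μ + μ') (ν + ν') = cw F μ ν + cw F μ' ν' := cw_add F μ μ' ν ν'
    have hdne : cw F (μ + μ') (ν + ν') ≠ 0 := by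
      intro h
      apply hne2
      rw [hdd] at h
      funext x
      exact (hcancel _ _ (congrFun h x)).symm
    have hkey : ∀ a b : ZMod 2, (b = 1 → a = 1) → (a + b = 1 ↔ a = 1 ∧ ¬ b = 1) := by
      decide
    have hsubset : (Finset.univ.filter fun x => cw F μ' ν' x = 1)
        ⊆ (Finset.univ.filter fun x => cw F μ ν x = 1) := by
      intro x hx
      rw [Finset.mem_filter] at hx ⊢
      exact ⟨Finset.mem_univ _, hsub hx.2⟩
    have hsupp : (Finset.univ.filter fun x => cw F (μ + μ') (ν + ν') x = 1)
        = (Finset.univ.filter fun x => cw F μ ν x = 1)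
          \ (Finset.univ.filter fun x => cw F μ' ν' x = 1) := by
      ext x
      rw [Finset.mem_sdiff, Finset.mem_filter, Finset.mem_filter, Finset.mem_filter]
      have hx := congrFun hdd x
      rw [Pi.add_apply] at hx
      constructor
      · intro ⟨_, hd1⟩
        rw [hx] at hd1
        have := (hkey _ _ (fun hb => hsub hb)).mp hd1
        exact ⟨⟨Finset.mem_univ _, this.1⟩, fun h => this.2 h.2⟩
      · intro ⟨⟨_, ha⟩, hb⟩
        refine ⟨Finset.mem_univ _, ?_⟩
        rw [hx]
        exact (hkey _ _ (fun hb' => hsub hb')).mpr ⟨ha, fun h => hb ⟨Finset.mem_univ _, h⟩⟩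
    have hwtd : wt (cw F (μ + μ') (ν + ν')) = wt (cw F μ ν) - wt (cw F μ' ν') := by
      unfold wt
      rw [hsupp, Finset.card_sdiff_of_subset hsubset]
    have hle : wt (cw F μ' ν') ≤ wt (cw F μ ν) := Finset.card_le_card hsubset
    have b1 := hbounds μ ν hcne
    have b2 := hbounds μ' ν' hc'ne
    have b3 := hbounds _ _ hdne
    omega
  -- counting
  have pcM : (Finset.univ : Finset (Fin m → ZMod 2)).card = 2^m := by
    rw [Finset.card_univ]; simp [Fintype.card_fun]
  have pcV : (Finset.univ : Finset (Fin n → ZMod 2)).card = 2^n := by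
    rw [Finset.card_univ]; simp [Fintype.card_fun]
  have hc_mid : ∀ μ : Fin m → ZMod 2,
      (Finset.univ.filter fun ν => wt (cw F μ ν) = 2^(n-1)).card
        = if μ = 0 then 2^n - 1 else 0 := by
    intro μ
    by_cases hμ : μ = 0
    · subst hμ
      rw [if_pos rfl]
      have heq : (Finset.univ.filter fun ν : Fin n → ZMod 2 => wt (cw F 0 ν) = 2^(n-1))
          = Finset.univ.filter (fun ν => ν ≠ 0) := by
        ext ν
        simp only [Finset.mem_filter, Finset.mem_univ, true_and]
        constructor
        · intro h heq0
          subst heq0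
          rw [hw00] at h
          omega
        · exact hmid ν
      rw [heq, Finset.filter_ne', Finset.card_erase_of_mem (Finset.mem_univ _), pcV]
    · rw [if_neg hμ, Finset.card_eq_zero, Finset.filter_eq_empty_iff]
      intro ν _
      rcases hpm μ hμ ν with ⟨_, hw⟩ | ⟨_, hw⟩ <;> rw [hw] <;> omega
  have hc_hi : ∀ μ : Fin m → ZMod 2,
      (Finset.univ.filter fun ν => wt (cw F μ ν) = 2^(n-1) + 2^(k-1)).card
        = if μ = 0 then 0 else 2^(n-1) - 2^(k-1) := by
    intro μ
    by_cases hμ : μ = 0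
    · subst hμ
      rw [if_pos rfl, Finset.card_eq_zero, Finset.filter_eq_empty_iff]
      intro ν _
      by_cases hν : ν = 0
      · subst hν; rw [hw00]; omega
      · rw [hmid ν hν]; omega
    · rw [if_neg hμ]
      have heq : (Finset.univ.filter fun ν : Fin n → ZMod 2 =>
            wt (cw F μ ν) = 2^(n-1) + 2^(k-1))
          = Finset.univ.filter (fun ν => ¬ whtF F μ ν = 2^k) := by
        ext ν
        simp only [Finset.mem_filter, Finset.mem_univ, true_and]
        rcases hpm μ hμ ν with ⟨hW, hw⟩ | ⟨hW, hw⟩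
        · rw [hw, hW]
          constructor
          · intro h; omega
          · intro h; exact absurd rfl h
        · rw [hw, hW]
          constructor
          · intro _ h
            have : (0:ℤ) < 2^k := by positivity
            linarith
          · intro _; rfl
      rw [heq]
      have := Finset.card_filter_add_card_filter_not
        (s := (Finset.univ : Finset (Fin n → ZMod 2)))
        (p := fun ν => whtF F μ ν = 2^k)
      rw [card_filter_pos F h0 μ k hk (by omega) (hbent μ hμ), pcV] at this
      omega
  have hc_lo : ∀ μ : Fin m → ZMod 2,
      (Finset.univ.filter fun ν => wt (cw F μ ν) = 2^(n-1) - 2^(k-1)).card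
        = if μ = 0 then 0 else 2^(n-1) + 2^(k-1) := by
    intro μ
    by_cases hμ : μ = 0
    · subst hμ
      rw [if_pos rfl, Finset.card_eq_zero, Finset.filter_eq_empty_iff]
      intro ν _
      by_cases hν : ν = 0
      · subst hν; rw [hw00]; omega
      · rw [hmid ν hν]; omega
    · rw [if_neg hμ]
      have heq : (Finset.univ.filter fun ν : Fin n → ZMod 2 =>
            wt (cw F μ ν) = 2^(n-1) - 2^(k-1))
          = Finset.univ.filter (fun ν => whtF F μ ν = 2^k) := by
        ext ν
        simp only [Finset.mem_filter, Finset.mem_univ, true_and]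
        rcases hpm μ hμ ν with ⟨hW, hw⟩ | ⟨hW, hw⟩
        · rw [hw, hW]
          exact ⟨fun _ => rfl, fun _ => rfl⟩
        · rw [hw, hW]
          constructor
          · intro h; omega
          · intro h
            have : (0:ℤ) < 2^k := by positivity
            linarith
      rw [heq, card_filter_pos F h0 μ k hk (by omega) (hbent μ hμ)]
  have hcard_ne : (Finset.univ.filter fun μ : Fin m → ZMod 2 => ¬ μ = 0).card
      = 2^m - 1 := by
    rw [Finset.filter_ne', Finset.card_erase_of_mem (Finset.mem_univ _), pcM]
  have sum_ite0 : ∀ (c : ℕ),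
      (∑ μ : Fin m → ZMod 2, if μ = 0 then 0 else c) = (2^m - 1) * c := by
    intro c
    rw [Finset.sum_ite, Finset.sum_const, Finset.sum_const, hcard_ne]
    simp [mul_comm]
  have part5 : (Finset.univ.filter fun p : (Fin m → ZMod 2) × (Fin n → ZMod 2) =>
      wt (cw F p.1 p.2) = 2^(n-1)).card = 2^n - 1 := by
    rw [card_filter_prod (fun μ ν => wt (cw F μ ν) = 2^(n-1))]
    rw [Finset.sum_congr rfl (fun μ _ => hc_mid μ), Finset.sum_ite_eq' Finset.univ 0
      (fun _ => 2^n - 1)]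
    simp
  have part6 : (Finset.univ.filter fun p : (Fin m → ZMod 2) × (Fin n → ZMod 2) =>
      wt (cw F p.1 p.2) = 2^(n-1) + 2^(k-1)).card
      = (2^m - 1) * (2^(n-1) - 2^(k-1)) := by
    rw [card_filter_prod (fun μ ν => wt (cw F μ ν) = 2^(n-1) + 2^(k-1))]
    rw [Finset.sum_congr rfl (fun μ _ => hc_hi μ), sum_ite0]
  have part7 : (Finset.univ.filter fun p : (Fin m → ZMod 2) × (Fin n → ZMod 2) =>
      wt (cw F p.1 p.2) = 2^(n-1) - 2^(k-1)).card
      = (2^m - 1) * (2^(n-1) + 2^(k-1)) := by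
    rw [card_filter_prod (fun μ ν => wt (cw F μ ν) = 2^(n-1) - 2^(k-1))]
    rw [Finset.sum_congr rfl (fun μ _ => hc_lo μ), sum_ite0]
  exact ⟨part1, part2, part3, part4, part5, part6, part7⟩
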